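/- Let E be a directed graph, K a field, c a simple closed path in E, and a ∈ (K^*)^{E^1}. Then the twisted Chen module V^a_{[c^∞]} is a simple L_K(E)-module. -/

import Mathlib

open scoped Classical

/-- A directed graph: vertices, edges, source and range maps. -/
structure DirGraph : Type 1 where
  V : Type
  E : Type
  s : E → V
  r : E → V

namespace DirGraph

variable (G : DirGraph)

/-- A finite path: a source vertex together with a compatible list of edges
(the empty list gives the path of length 0 at `src`). -/
structure FinPath where
  src : G.V
  edges : List G.E
  src_eq : ∀ e ∈ edges.head?, G.s e = src
  chain : edges.Chain' (fun e f => G.r e = G.s f)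

variable {G}

/-- The range of a finite path. -/
def FinPath.rng (μ : G.FinPath) : G.V :=
  ((μ.edges.getLast?).map G.r).getD μ.src

/-- The length of a finite path. -/
def FinPath.length (μ : G.FinPath) : ℕ := μ.edges.length

variable (G)

/-- An infinite path. -/
structure InfPath where
  edges : ℕ → G.E
  chain : ∀ n, G.r (edges n) = G.s (edges (n + 1))

/-- The source of an infinite path. -/
def InfPath.src {G : DirGraph} (p : G.InfPath) : G.V := G.s (p.edges 0)

def IsSink (v : G.V) : Prop := ∀ e, G.s e ≠ v

def IsInfEmitter (v : G.V) : Prop := {e | G.s e = v}.Infinite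

def IsSingular (v : G.V) : Prop := IsSink G v ∨ IsInfEmitter G v

/-- Boundary paths: infinite paths, together with finite paths ending in a singular vertex. -/
def BPath : Type := {x : G.FinPath ⊕ G.InfPath // ∀ μ, x = Sum.inl μ → IsSingular G μ.rng}

variable {G}

/-- The source of a boundary path. -/
def BPath.src (x : G.BPath) : G.V :=
  match x.1 with
  | Sum.inl μ => μ.src
  | Sum.inr p => p.src

def BPath.IsInfinite (x : G.BPath) : Prop := ∃ p, x.1 = Sum.inr p

/-- `IsCat μ p x` means `x = μ p`, i.e. `x` is the concatenation of the finite path `μ`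
with the boundary path `p` (in particular `r(μ) = s(p)`). -/
def IsCat (μ : G.FinPath) (p x : G.BPath) : Prop :=
  μ.rng = p.src ∧
  match p.1, x.1 with
  | Sum.inl q, Sum.inl ξ => ξ.src = μ.src ∧ ξ.edges = μ.edges ++ q.edges
  | Sum.inr q, Sum.inr ξ =>
      (∀ (i : ℕ) (h : i < μ.edges.length), ξ.edges i = μ.edges.get ⟨i, h⟩) ∧
      (∀ i : ℕ, ξ.edges (μ.edges.length + i) = q.edges i)
  | _, _ => False

/-- `x ∼_k y` : tail equivalence with lag `k`. -/
def TailEqLag (x y : G.BPath) (k : ℤ) : Prop :=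
  ∃ (μ ν : G.FinPath) (p : G.BPath),
    IsCat μ p x ∧ IsCat ν p y ∧ (μ.length : ℤ) - (ν.length : ℤ) = k

/-- Tail equivalence. -/
def TailEq (x y : G.BPath) : Prop := ∃ k, TailEqLag x y k

/-- The tail-equivalence class (orbit) of a boundary path. -/
def orbit (x : G.BPath) : Set G.BPath := {y | TailEq y x}

/-- A closed path: positive length, same source and range. -/
def FinPath.IsClosed (c : G.FinPath) : Prop := 0 < c.length ∧ c.rng = c.src

/-- A boundary path is rational if it is tail equivalent to `c^∞` for some closed path `c`;
here `c^∞` is characterized as the unique boundary path `p` with `p = c p`. -/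
def IsRational (x : G.BPath) : Prop :=
  ∃ (c : G.FinPath) (p : G.BPath), 0 < c.length ∧ IsCat c p p ∧ TailEq x p

/-- A simple closed path: a closed path which is not a proper power of a closed path. -/
def FinPath.IsSimpleClosed (c : G.FinPath) : Prop :=
  c.IsClosed ∧
    ¬ ∃ (d : G.FinPath) (n : ℕ), 2 ≤ n ∧ d.IsClosed ∧ c.src = d.src ∧
        c.edges = (List.replicate n d.edges).flatten

/-- A cycle: a closed path passing through no vertex twice. -/
def FinPath.IsCycle (c : G.FinPath) : Prop := c.IsClosed ∧ (c.edges.map G.s).Nodup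

/-- An exit for a finite path. -/
def FinPath.HasExit (c : G.FinPath) : Prop :=
  ∃ (i : ℕ) (h : i < c.edges.length) (e : G.E),
    G.s e = G.s (c.edges.get ⟨i, h⟩) ∧ e ≠ c.edges.get ⟨i, h⟩

/-- `c` is a rotation of `d`. -/
def FinPath.IsRotationOf (c d : G.FinPath) : Prop := ∃ i, c.edges = d.edges.rotate i

/-- A maximal cycle: a cycle such that any cycle from which there is a finite path to its
source is a rotation of it. -/
def FinPath.IsMaxCycle (c : G.FinPath) : Prop :=
  c.IsCycle ∧ ∀ d : G.FinPath, d.IsCycle →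
    (∃ μ : G.FinPath, μ.src = d.src ∧ μ.rng = c.src) → d.IsRotationOf c

/-- A maximal sink: a sink with no finite path from the source of any cycle to it. -/
def IsMaxSink (G : DirGraph) (v : G.V) : Prop :=
  IsSink G v ∧ ¬ ∃ (d μ : G.FinPath), d.IsCycle ∧ μ.src = d.src ∧ μ.rng = v

/-- A graph is row-finite if every vertex emits finitely many edges. -/
def RowFinite (G : DirGraph) : Prop := ∀ v : G.V, {e | G.s e = v}.Finite

/-- The set of predecessors of a vertex. -/
def preds (G : DirGraph) (v : G.V) : Set G.V := {w | ∃ μ : G.FinPath, μ.src = w ∧ μ.rng = v}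

/-- The finite path of length 0 at a vertex. -/
def vertexPath (G : DirGraph) (v : G.V) : G.FinPath :=
  ⟨v, [], by intro e he; simp at he, List.isChain_nil⟩

/-- A singular vertex, seen as a boundary path. -/
def vertexBPath (G : DirGraph) (v : G.V) (h : IsSingular G v) : G.BPath :=
  ⟨Sum.inl (vertexPath G v), by
    intro μ hμ
    injection hμ with h2
    subst h2
    exact h⟩

/-- The finite path consisting of a single edge. -/
def singleE (G : DirGraph) (e : G.E) : G.FinPath :=
  ⟨G.s e, [e], by
    intro f hf
    simp only [List.head?_cons, Option.mem_def, Option.some.injEq] at hf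
    subst hf
    rfl, List.isChain_singleton e⟩

/-- `a_μ`: the product of the values of `a` along a finite path. -/
def aval {G : DirGraph} {K : Type} [Field K] (a : G.E → K) (μ : G.FinPath) : K :=
  (μ.edges.map a).prod

/-! ## The Leavitt path algebra -/

/-- Generators of the Leavitt path algebra: vertices, edges and ghost edges. -/
inductive Gen (G : DirGraph) : Type
  | vtx : G.V → Gen G
  | edg : G.E → Gen G
  | ghd : G.E → Gen G

/-- The defining relations of the Leavitt path algebra. -/
inductive LRel (G : DirGraph) (K : Type) [Field K] :
    FreeAlgebra K (Gen G) → FreeAlgebra K (Gen G) → Prop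
  | vv_eq (v : G.V) :
      LRel G K (FreeAlgebra.ι K (Gen.vtx v) * FreeAlgebra.ι K (Gen.vtx v))
        (FreeAlgebra.ι K (Gen.vtx v))
  | vv_ne {v w : G.V} (h : v ≠ w) :
      LRel G K (FreeAlgebra.ι K (Gen.vtx v) * FreeAlgebra.ι K (Gen.vtx w)) 0
  | e1l (e : G.E) :
      LRel G K (FreeAlgebra.ι K (Gen.vtx (G.s e)) * FreeAlgebra.ι K (Gen.edg e))
        (FreeAlgebra.ι K (Gen.edg e))
  | e1r (e : G.E) :
      LRel G K (FreeAlgebra.ι K (Gen.edg e) * FreeAlgebra.ι K (Gen.vtx (G.r e)))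
        (FreeAlgebra.ι K (Gen.edg e))
  | e2l (e : G.E) :
      LRel G K (FreeAlgebra.ι K (Gen.vtx (G.r e)) * FreeAlgebra.ι K (Gen.ghd e))
        (FreeAlgebra.ι K (Gen.ghd e))
  | e2r (e : G.E) :
      LRel G K (FreeAlgebra.ι K (Gen.ghd e) * FreeAlgebra.ι K (Gen.vtx (G.s e)))
        (FreeAlgebra.ι K (Gen.ghd e))
  | ck1_eq (e : G.E) :
      LRel G K (FreeAlgebra.ι K (Gen.ghd e) * FreeAlgebra.ι K (Gen.edg e))
        (FreeAlgebra.ι K (Gen.vtx (G.r e)))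
  | ck1_ne {e f : G.E} (h : e ≠ f) :
      LRel G K (FreeAlgebra.ι K (Gen.ghd e) * FreeAlgebra.ι K (Gen.edg f)) 0
  | ck2 (v : G.V) (hfin : {e | G.s e = v}.Finite) (hne : ∃ e, G.s e = v) :
      LRel G K (FreeAlgebra.ι K (Gen.vtx v))
        (∑ e ∈ hfin.toFinset, FreeAlgebra.ι K (Gen.edg e) * FreeAlgebra.ι K (Gen.ghd e))

/-- The Leavitt path algebra of `G` over `K`. -/
abbrev LPA (G : DirGraph) (K : Type) [Field K] : Type := RingQuot (LRel G K)

/-- The image of a vertex in the Leavitt path algebra. -/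
def ofV (G : DirGraph) (K : Type) [Field K] (v : G.V) : LPA G K :=
  RingQuot.mkAlgHom K (LRel G K) (FreeAlgebra.ι K (Gen.vtx v))

/-- The image of an edge in the Leavitt path algebra. -/
def ofE (G : DirGraph) (K : Type) [Field K] (e : G.E) : LPA G K :=
  RingQuot.mkAlgHom K (LRel G K) (FreeAlgebra.ι K (Gen.edg e))

/-- The image of a ghost edge in the Leavitt path algebra. -/
def ofG (G : DirGraph) (K : Type) [Field K] (e : G.E) : LPA G K :=
  RingQuot.mkAlgHom K (LRel G K) (FreeAlgebra.ι K (Gen.ghd e))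

/-- The element `μ` of the Leavitt path algebra associated to a finite path `μ`. -/
def pathElem (G : DirGraph) (K : Type) [Field K] (μ : G.FinPath) : LPA G K :=
  ofV G K μ.src * (μ.edges.map (ofE G K)).prod

/-- The element `μ^*` of the Leavitt path algebra associated to a finite path `μ`. -/
def pathStarElem (G : DirGraph) (K : Type) [Field K] (μ : G.FinPath) : LPA G K :=
  (μ.edges.reverse.map (ofG G K)).prod * ofV G K μ.src

/-- The degree-`n` homogeneous component of the canonical `ℤ`-grading of the Leavitt
path algebra: the span of the monomials `μ ν^*` with `|μ| - |ν| = n`. -/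
def LPAdeg (G : DirGraph) (K : Type) [Field K] (n : ℤ) : Submodule K (LPA G K) :=
  Submodule.span K {x | ∃ μ ν : G.FinPath, μ.rng = ν.rng ∧
    (μ.length : ℤ) - (ν.length : ℤ) = n ∧ x = pathElem G K μ * pathStarElem G K ν}

/-- `W` is a `ℤ`-grading making `M` a graded module over the canonically graded
Leavitt path algebra. -/
def IsModuleGrading (G : DirGraph) (K : Type) [Field K] (M : Type) [AddCommGroup M]
    [Module K M] [Module (LPA G K) M] (W : ℤ → Submodule K M) : Prop :=
  DirectSum.IsInternal W ∧
    ∀ (m k : ℤ) (a : LPA G K) (y : M), a ∈ LPAdeg G K m → y ∈ W k → a • y ∈ W (m + k)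

/-- A set is graded (with respect to a grading `W`) if each of its elements is a finite sum
of homogeneous elements of the set. -/
def GradedCarrier {K M : Type} [Field K] [AddCommGroup M] [Module K M]
    (W : ℤ → Submodule K M) (S : Set M) : Prop :=
  ∀ m ∈ S, ∃ l : List M, (∀ z ∈ l, z ∈ S ∧ ∃ k, z ∈ W k) ∧ l.sum = m

/-- A graded isomorphism between graded modules over the Leavitt path algebra. -/
def GradedIsoLPA (G : DirGraph) (K : Type) [Field K] (M N : Type)
    [AddCommGroup M] [AddCommGroup N] [Module K M] [Module K N]
    [Module (LPA G K) M] [Module (LPA G K) N]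
    (W : ℤ → Submodule K M) (W' : ℤ → Submodule K N) : Prop :=
  ∃ f : M ≃ₗ[LPA G K] N, (∀ k, ∀ m ∈ W k, f m ∈ W' k) ∧ ∀ k, ∀ n ∈ W' k, f.symm n ∈ W k

/-- A module over the Leavitt path algebra is unital if it is generated by the images of the
vertices. -/
def IsUnitalModule (G : DirGraph) (K : Type) [Field K] (M : Type) [AddCommGroup M]
    [Module (LPA G K) M] : Prop :=
  ∀ m : M, m ∈ Submodule.span (LPA G K) {y : M | ∃ (v : G.V) (m' : M), y = ofV G K v • m'}

/-! ## Chen modules, specified by a basis and the action of the generators -/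

/-- A specification of the (twisted) Chen module attached to a boundary path `x`:
an `L_K(E)`-module `M` which is a `K'`-vector space with basis the tail-equivalence class
of `x`, the generators acting by the τ-twisted shift formulas. Here `K ⊆ K'` is a field
extension and `τ : E¹ → K'` is a family of nonzero scalars. -/
structure ChenSpecT (G : DirGraph) (K K' : Type) [Field K] [Field K'] [Algebra K K']
    (τ : G.E → K') (x : G.BPath) (M : Type) [AddCommGroup M] [Module K' M]
    [Module (LPA G K) M] : Type where
  tau_ne : ∀ e, τ e ≠ 0
  basis : Module.Basis (orbit x) K' M
  act_v : ∀ (v : G.V) (p : orbit x),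
    ofV G K v • basis p = if v = BPath.src (p : G.BPath) then basis p else 0
  act_e : ∀ (e : G.E) (p q : orbit x), IsCat (singleE G e) (p : G.BPath) (q : G.BPath) →
    ofE G K e • basis p = τ e • basis q
  act_e_zero : ∀ (e : G.E) (p : orbit x),
    (¬ ∃ q : G.BPath, IsCat (singleE G e) (p : G.BPath) q) → ofE G K e • basis p = 0
  act_g : ∀ (e : G.E) (p q : orbit x), IsCat (singleE G e) (p : G.BPath) (q : G.BPath) →
    ofG G K e • basis q = (τ e)⁻¹ • basis p
  act_g_zero : ∀ (e : G.E) (q : orbit x),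
    (¬ ∃ p : G.BPath, IsCat (singleE G e) p (q : G.BPath)) → ofG G K e • basis q = 0

/-- Specification of the Chen module `V_{[x]}^a` twisted by `a : E¹ → K^*`
(`a = 1` gives `V_{[x]}`). -/
abbrev ChenSpec (G : DirGraph) (K : Type) [Field K] (a : G.E → K) (x : G.BPath) (M : Type)
    [AddCommGroup M] [Module K M] [Module (LPA G K) M] : Type :=
  ChenSpecT G K K a x M

/-- The canonical grading on a Chen module: the degree-`k` component is spanned by the basis
elements tail-equivalent to `x` with lag `k`. -/
def chenW {G : DirGraph} {K' : Type} [Field K'] {x : G.BPath} {M : Type}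
    [AddCommGroup M] [Module K' M] (b : Module.Basis (orbit x) K' M) (k : ℤ) : Submodule K' M :=
  Submodule.span K' (⇑b '' {p : orbit x | TailEqLag (p : G.BPath) x k})

/-! ## The module `K L_x` -/

/-- The set `L_x` of pairs `(y, k)` with `y ∼_k x`. -/
def Lset (G : DirGraph) (x : G.BPath) : Set (G.BPath × ℤ) := {yk | TailEqLag yk.1 x yk.2}

/-- The underlying `K`-vector space of the module `K L_x`, with basis `L_x`. -/
abbrev KLCarrier (G : DirGraph) (K : Type) [Field K] (x : G.BPath) : Type := (Lset G x) →₀ K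

/-- Specification of the `L_K(E)`-module structure on `K L_x`, given by
`(μ ν^*) ⬝ (y, k) = (μ p, |μ| - |ν| + k)` when `y = ν p`, and `0` otherwise. The module
structure is encoded as a `K`-algebra homomorphism `ρ` to the endomorphism algebra. -/
def KLSpec (G : DirGraph) (K : Type) [Field K] (x : G.BPath)
    (ρ : LPA G K →ₐ[K] Module.End K (KLCarrier G K x)) : Prop :=
  (∀ (μ ν : G.FinPath), μ.rng = ν.rng → ∀ (yk zk : Lset G x) (p : G.BPath),
      IsCat ν p (yk : G.BPath × ℤ).1 → IsCat μ p (zk : G.BPath × ℤ).1 →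
      (zk : G.BPath × ℤ).2 = (yk : G.BPath × ℤ).2 + (μ.length : ℤ) - (ν.length : ℤ) →
      ρ (pathElem G K μ * pathStarElem G K ν) (Finsupp.single yk 1) = Finsupp.single zk 1) ∧
  (∀ (μ ν : G.FinPath), μ.rng = ν.rng → ∀ yk : Lset G x,
      (¬ ∃ p : G.BPath, IsCat ν p (yk : G.BPath × ℤ).1) →
      ρ (pathElem G K μ * pathStarElem G K ν) (Finsupp.single yk 1) = 0)

/-- The canonical grading of `K L_x`: `(y, k)` is homogeneous of degree `k`. -/
noncomputable def KLgr (G : DirGraph) (K : Type) [Field K] (x : G.BPath) (k : ℤ) :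
    Submodule K (KLCarrier G K x) :=
  Submodule.span K {m | ∃ yk : Lset G x, (yk : G.BPath × ℤ).2 = k ∧ m = Finsupp.single yk 1}

end DirGraph

namespace DirGraph
section Aux
variable {G : DirGraph}

theorem FinPath.ext' {μ ν : G.FinPath} (h1 : μ.src = ν.src) (h2 : μ.edges = ν.edges) :
    μ = ν := by
  cases μ; cases ν; dsimp at h1 h2; subst h1; subst h2; rfl

theorem InfPath.ext' {p q : G.InfPath} (h : p.edges = q.edges) : p = q := by
  cases p; cases q; dsimp at h; subst h; rfl

theorem rng_nil {μ : G.FinPath} (h : μ.edges = []) : μ.rng = μ.src := by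
  simp [FinPath.rng, h]

theorem rng_of_getLast {μ : G.FinPath} {e : G.E} (h : μ.edges.getLast? = some e) :
    μ.rng = G.r e := by
  simp [FinPath.rng, h]

/-- The tail of a finite path whose edges are `e :: es`. -/
def FinPath.tail (μ : G.FinPath) (e : G.E) (es : List G.E) (h : μ.edges = e :: es) :
    G.FinPath :=
  ⟨G.r e, es, by
    have := μ.chain
    rw [h] at this
    have := List.isChain_cons.mp this
    exact fun f hf => (this.1 f hf).symm, by
    have := μ.chain
    rw [h] at this
    have := List.isChain_cons.mp this
    exact this.2⟩

@[simp] theorem FinPath.tail_edges (μ : G.FinPath) (e es) (h : μ.edges = e :: es) :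
    (μ.tail e es h).edges = es := rfl

@[simp] theorem FinPath.tail_src (μ : G.FinPath) (e es) (h : μ.edges = e :: es) :
    (μ.tail e es h).src = G.r e := rfl

theorem FinPath.tail_rng (μ : G.FinPath) (e es) (h : μ.edges = e :: es) :
    (μ.tail e es h).rng = μ.rng := by
  cases es with
  | nil =>
    have : μ.edges.getLast? = some e := by rw [h]; rfl
    rw [rng_of_getLast this, rng_nil (μ := μ.tail e [] h) rfl, FinPath.tail_src]
  | cons f fs =>
    obtain ⟨x, hx⟩ : ∃ x, (f :: fs).getLast? = some x := by
      cases hq : (f :: fs).getLast? with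
      | none => simp at hq
      | some x => exact ⟨x, rfl⟩
    have h1 : (μ.tail e (f :: fs) h).edges.getLast? = some x := hx
    have h2 : μ.edges.getLast? = some x := by
      rw [h, List.getLast?_cons_cons]; exact hx
    rw [rng_of_getLast h1, rng_of_getLast h2]

/-- Concatenation of finite paths. -/
def FinPath.app (μ ν : G.FinPath) (h : μ.rng = ν.src) : G.FinPath :=
  ⟨μ.src, μ.edges ++ ν.edges, by
    intro f hf
    cases hμ : μ.edges with
    | nil =>
      rw [hμ, List.nil_append] at hf
      rw [ν.src_eq f hf, ← h, rng_nil hμ]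
    | cons g gs =>
      rw [hμ, List.cons_append, List.head?_cons, Option.mem_def, Option.some.injEq] at hf
      cases hf
      exact μ.src_eq _ (by rw [hμ]; rfl), by
    refine List.IsChain.append μ.chain ν.chain ?_
    intro x hx y hy
    have hr : μ.rng = G.r x := rng_of_getLast hx
    have hs : G.s y = ν.src := ν.src_eq y hy
    rw [← hr, h, ← hs]⟩

@[simp] theorem FinPath.app_edges (μ ν : G.FinPath) (h) :
    (μ.app ν h).edges = μ.edges ++ ν.edges := rfl

@[simp] theorem FinPath.app_src (μ ν : G.FinPath) (h) : (μ.app ν h).src = μ.src := rfl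

theorem FinPath.app_rng (μ ν : G.FinPath) (h) : (μ.app ν h).rng = ν.rng := by
  cases hν : ν.edges with
  | nil =>
    have : (μ.app ν h).edges = μ.edges := by rw [FinPath.app_edges, hν, List.append_nil]
    have h2 : (μ.app ν h).rng = μ.rng := by
      simp only [FinPath.rng, this, FinPath.app_src]
    rw [h2, h, rng_nil hν]
  | cons f fs =>
    obtain ⟨x, hx⟩ : ∃ x, (f :: fs).getLast? = some x := by
      cases hq : (f :: fs).getLast? with
      | none => simp at hq
      | some x => exact ⟨x, rfl⟩
    have h1 : (μ.app ν h).edges.getLast? = some x := by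
      rw [FinPath.app_edges, hν, List.getLast?_append_cons]; exact hx
    have h2 : ν.edges.getLast? = some x := by rw [hν]; exact hx
    rw [rng_of_getLast h1, rng_of_getLast h2]

end Aux
end DirGraph
namespace DirGraph
section Aux2
variable {G : DirGraph}

theorem head?_get {α : Type _} (l : List α) (h : 0 < l.length) :
    l.head? = some (l.get ⟨0, h⟩) := by
  cases l with
  | nil => simp at h
  | cons a t => rfl

@[simp] theorem singleE_edges (e : G.E) : (singleE G e).edges = [e] := rfl
@[simp] theorem singleE_src (e : G.E) : (singleE G e).src = G.s e := rfl
@[simp] theorem singleE_rng (e : G.E) : (singleE G e).rng = G.r e := rfl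

theorem cat_src {μ : G.FinPath} {p x : G.BPath} (h : IsCat μ p x) :
    x.src = μ.src := by
  obtain ⟨hr, hm⟩ := h
  obtain ⟨px, hpx⟩ := p
  obtain ⟨xx, hxx⟩ := x
  cases px with
  | inl q =>
    cases xx with
    | inl ξ => exact hm.1
    | inr ξ => exact hm.elim
  | inr q =>
    cases xx with
    | inl ξ => exact hm.elim
    | inr ξ =>
      show G.s (ξ.edges 0) = μ.src
      by_cases hμ : μ.edges = []
      · have h2 := hm.2 0
        rw [hμ] at h2
        simp only [List.length_nil, Nat.zero_add] at h2
        rw [h2]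
        exact hr.symm.trans (rng_nil hμ)
      · have h0 : 0 < μ.edges.length := List.length_pos_iff.mpr hμ
        rw [hm.1 0 h0]
        exact μ.src_eq _ (head?_get _ h0)

theorem catNilSelf {μ : G.FinPath} (hμ : μ.edges = []) {p : G.BPath}
    (h : μ.rng = p.src) : IsCat μ p p := by
  refine ⟨h, ?_⟩
  obtain ⟨px, hpx⟩ := p
  cases px with
  | inl q =>
    refine ⟨?_, ?_⟩
    · show q.src = μ.src
      rw [← rng_nil hμ]; exact h.symm
    · rw [hμ, List.nil_append]
  | inr q =>
    refine ⟨?_, ?_⟩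
    · intro i hi
      rw [hμ] at hi
      simp at hi
    · intro i
      rw [hμ]
      simp

theorem uniq_x {μ : G.FinPath} {p x x' : G.BPath} (h : IsCat μ p x)
    (h' : IsCat μ p x') : x = x' := by
  obtain ⟨hr, hm⟩ := h
  obtain ⟨hr', hm'⟩ := h'
  obtain ⟨px, hpx⟩ := p
  obtain ⟨xx, hxx⟩ := x
  obtain ⟨xx', hxx'⟩ := x'
  cases px with
  | inl q =>
    cases xx with
    | inl ξ =>
      cases xx' with
      | inl ξ' =>
        exact Subtype.ext (congrArg Sum.inl
          (FinPath.ext' (hm.1.trans hm'.1.symm) (hm.2.trans hm'.2.symm)))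
      | inr ξ' => exact hm'.elim
    | inr ξ => exact hm.elim
  | inr q =>
    cases xx with
    | inl ξ => exact hm.elim
    | inr ξ =>
      cases xx' with
      | inl ξ' => exact hm'.elim
      | inr ξ' =>
        refine Subtype.ext (congrArg Sum.inr (InfPath.ext' (funext fun n => ?_)))
        by_cases hn : n < μ.edges.length
        · rw [hm.1 n hn, hm'.1 n hn]
        · have hle : μ.edges.length ≤ n := Nat.le_of_not_lt hn
          have : μ.edges.length + (n - μ.edges.length) = n := Nat.add_sub_cancel' hle
          rw [← this, hm.2, hm'.2]

theorem uniq_p {μ : G.FinPath} {p p' x : G.BPath} (h : IsCat μ p x)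
    (h' : IsCat μ p' x) : p = p' := by
  obtain ⟨hr, hm⟩ := h
  obtain ⟨hr', hm'⟩ := h'
  obtain ⟨xx, hxx⟩ := x
  obtain ⟨px, hpx⟩ := p
  obtain ⟨px', hpx'⟩ := p'
  cases xx with
  | inl ξ =>
    cases px with
    | inl q =>
      cases px' with
      | inl q' =>
        refine Subtype.ext (congrArg Sum.inl (FinPath.ext' ?_ ?_))
        · show q.src = q'.src
          exact hr.symm.trans hr'
        · exact List.append_cancel_left (hm.2.symm.trans hm'.2)
      | inr q' => exact hm'.elim
    | inr q => exact hm.elim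
  | inr ξ =>
    cases px with
    | inl q => exact hm.elim
    | inr q =>
      cases px' with
      | inl q' => exact hm'.elim
      | inr q' =>
        refine Subtype.ext (congrArg Sum.inr (InfPath.ext' (funext fun n => ?_)))
        rw [← hm.2 n, ← hm'.2 n]

theorem catAssoc {μ ν : G.FinPath} {p q x : G.BPath} (h1 : IsCat μ p x)
    (h2 : IsCat ν q p) (hs : μ.rng = ν.src) : IsCat (μ.app ν hs) q x := by
  obtain ⟨hr1, hm1⟩ := h1
  obtain ⟨hr2, hm2⟩ := h2
  refine ⟨by rw [FinPath.app_rng]; exact hr2, ?_⟩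
  obtain ⟨qq, hq⟩ := q
  obtain ⟨pp, hp⟩ := p
  obtain ⟨xx, hx⟩ := x
  cases qq with
  | inl w =>
    cases pp with
    | inl u =>
      cases xx with
      | inl ξ =>
        refine ⟨hm1.1, ?_⟩
        rw [hm1.2, hm2.2, FinPath.app_edges, List.append_assoc]
      | inr ξ => exact hm1.elim
    | inr u => exact hm2.elim
  | inr w =>
    cases pp with
    | inl u => exact hm2.elim
    | inr u =>
      cases xx with
      | inl ξ => exact hm1.elim
      | inr ξ =>
        constructor
        · intro i hi
          have hilen : i < (μ.edges ++ ν.edges).length := hi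
          show ξ.edges i = (μ.edges ++ ν.edges).get ⟨i, hilen⟩
          by_cases h : i < μ.edges.length
          · rw [hm1.1 i h]
            simp only [List.get_eq_getElem]; exact (List.getElem_append_left h).symm
          · have hle : μ.edges.length ≤ i := Nat.le_of_not_lt h
            have hi2 := hilen
            rw [List.length_append] at hi2
            have hi' : i - μ.edges.length < ν.edges.length := by omega
            have heq : μ.edges.length + (i - μ.edges.length) = i := Nat.add_sub_cancel' hle
            conv_lhs => rw [← heq]
            rw [hm1.2, hm2.1 _ hi']
            simp only [List.get_eq_getElem]; rw [List.getElem_append_right (by omega)]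
        · intro i
          show ξ.edges ((μ.edges ++ ν.edges).length + i) = w.edges i
          rw [List.length_append, Nat.add_assoc, hm1.2, hm2.2]

theorem catExists (μ : G.FinPath) (p : G.BPath) (h : μ.rng = p.src) :
    ∃ x, IsCat μ p x := by
  obtain ⟨pp, hps⟩ := p
  cases pp with
  | inl q =>
    refine ⟨⟨Sum.inl (μ.app q h), ?_⟩, h, rfl, rfl⟩
    intro ξ hξ
    injection hξ with h2
    rw [← h2]
    exact (congrArg (IsSingular G) (FinPath.app_rng μ q h)).mpr (hps q rfl)
  | inr w =>
    refine ⟨⟨Sum.inr ⟨fun n => if hn : n < μ.edges.length then μ.edges.get ⟨n, hn⟩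
      else w.edges (n - μ.edges.length), ?_⟩, fun ξ hξ => by cases hξ⟩,
      h, ?_, ?_⟩
    · intro n
      by_cases h1 : n + 1 < μ.edges.length
      · have h0 : n < μ.edges.length := Nat.lt_of_succ_lt h1
        rw [dif_pos h0, dif_pos h1]
        exact List.isChain_iff_getElem.mp μ.chain n h1
      · by_cases h2 : n < μ.edges.length
        · have hlen : n + 1 = μ.edges.length := by omega
          rw [dif_pos h2, dif_neg h1]
          have hne : μ.edges ≠ [] := by
            intro hc; rw [hc] at h2; simp at h2
          have hlast : μ.edges.getLast? = some (μ.edges.get ⟨n, h2⟩) := by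
            have hn1 : μ.edges.length - 1 = n := by omega
            rw [List.getLast?_eq_getElem?, hn1, List.getElem?_eq_getElem h2]
            rfl
          have : μ.rng = G.r (μ.edges.get ⟨n, h2⟩) := rng_of_getLast hlast
          rw [← this, h]
          have : n + 1 - μ.edges.length = 0 := by omega
          rw [this]
          rfl
        · have hle : μ.edges.length ≤ n := Nat.le_of_not_lt h2
          rw [dif_neg h2, dif_neg h1]
          have h3 : n + 1 - μ.edges.length = (n - μ.edges.length) + 1 := by omega
          rw [h3]
          exact w.chain (n - μ.edges.length)
    · intro i hi
      exact dif_pos hi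
    · intro i
      dsimp only
      have : ¬ (μ.edges.length + i < μ.edges.length) := by omega
      rw [dif_neg this]
      congr 1
      omega

theorem single_cat_inj {e e' : G.E} {p p' q : G.BPath}
    (h : IsCat (singleE G e) p q) (h' : IsCat (singleE G e') p' q) :
    e = e' ∧ p = p' := by
  obtain ⟨hr, hm⟩ := h
  obtain ⟨hr', hm'⟩ := h'
  obtain ⟨qq, hq⟩ := q
  obtain ⟨pp, hp⟩ := p
  obtain ⟨pp', hp'⟩ := p'
  cases qq with
  | inl ξ =>
    cases pp with
    | inl u =>
      cases pp' with
      | inl u' =>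
        have h2 := hm.2.symm.trans hm'.2
        simp only [singleE_edges, List.cons_append, List.nil_append,
          List.cons.injEq] at h2
        refine ⟨h2.1, Subtype.ext (congrArg Sum.inl (FinPath.ext' ?_ h2.2))⟩
        exact hr.symm.trans (by rw [h2.1]; exact hr')
      | inr u' => exact hm'.elim
    | inr u => exact hm.elim
  | inr ξ =>
    cases pp with
    | inl u => exact hm.elim
    | inr u =>
      cases pp' with
      | inl u' => exact hm'.elim
      | inr u' =>
        have he : e = e' := by
          have v1 := hm.1 0 (by simp)
          have v2 := hm'.1 0 (by simp)
          exact v1.symm.trans v2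
        exact ⟨he, Subtype.ext (congrArg Sum.inr (InfPath.ext' (funext fun n =>
          (hm.2 n).symm.trans (hm'.2 n))))⟩

end Aux2
end DirGraph
namespace DirGraph
section Aux3
variable {G : DirGraph}

theorem cat_tail {μ : G.FinPath} {t x : G.BPath} (hcat : IsCat μ t x)
    {e : G.E} {es : List G.E} (hμ : μ.edges = e :: es) :
    ∃ x', IsCat (μ.tail e es hμ) t x' ∧ IsCat (singleE G e) x' x := by
  have hrng : (μ.tail e es hμ).rng = t.src := by
    rw [FinPath.tail_rng]; exact hcat.1
  obtain ⟨x', hx'⟩ := catExists _ t hrng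
  have hsrc : x'.src = G.r e := cat_src hx'
  have hs2 : (singleE G e).rng = (μ.tail e es hμ).src := rfl
  obtain ⟨x'', hx''⟩ := catExists (singleE G e) x' (by rw [singleE_rng, ← hsrc])
  have happ : (singleE G e).app (μ.tail e es hμ) hs2 = μ := by
    refine FinPath.ext' ?_ ?_
    · exact μ.src_eq e (by rw [hμ]; rfl)
    · rw [FinPath.app_edges, singleE_edges, FinPath.tail_edges, hμ]; rfl
  have hcat2 : IsCat μ t x'' := by
    rw [← happ]
    exact catAssoc hx'' hx' hs2
  have : x'' = x := uniq_x hcat2 hcat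
  rw [this] at hx''
  exact ⟨x', hx', hx''⟩

theorem cat_inr_of_inr {μ : G.FinPath} {p x : G.BPath} (h : IsCat μ p x)
    {w : G.InfPath} (hp : p.1 = Sum.inr w) : ∃ w', x.1 = Sum.inr w' := by
  obtain ⟨hr, hm⟩ := h
  obtain ⟨pp, hps⟩ := p
  obtain ⟨xx, hxs⟩ := x
  dsimp at hp ⊢
  cases pp with
  | inl q => exact absurd hp (by simp)
  | inr q =>
    cases xx with
    | inl ξ => exact hm.elim
    | inr ξ => exact ⟨ξ, rfl⟩

theorem cat_inr_of_inr' {μ : G.FinPath} {p x : G.BPath} (h : IsCat μ p x)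
    {w : G.InfPath} (hx : x.1 = Sum.inr w) : ∃ w', p.1 = Sum.inr w' := by
  obtain ⟨hr, hm⟩ := h
  obtain ⟨pp, hps⟩ := p
  obtain ⟨xx, hxs⟩ := x
  dsimp at hx ⊢
  cases xx with
  | inl ξ => exact absurd hx (by simp)
  | inr ξ =>
    cases pp with
    | inl q => exact hm.elim
    | inr q => exact ⟨q, rfl⟩

theorem mem_orbit_self (x : G.BPath) : x ∈ orbit x := by
  refine ⟨0, vertexPath G x.src, vertexPath G x.src, x, ?_, ?_, by simp⟩ <;>
    exact catNilSelf rfl (rng_nil rfl)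

theorem orbit_cons {e : G.E} {y p q : G.BPath} (hp : p ∈ orbit y)
    (h : IsCat (singleE G e) p q) : q ∈ orbit y := by
  obtain ⟨k, α, β, r, hα, hβ, hk⟩ := hp
  have hs : (singleE G e).rng = α.src := h.1.trans (cat_src hα)
  have hk' : (α.edges.length : ℤ) - (β.edges.length : ℤ) = k := hk
  exact ⟨k + 1, (singleE G e).app α hs, β, r, catAssoc h hα hs, hβ, by
    simp only [FinPath.length, FinPath.app_edges, List.length_append, singleE_edges,
      List.length_cons, List.length_nil]
    push_cast
    omega⟩

theorem emptyCat {μ : G.FinPath} {p x : G.BPath} (h : IsCat μ p x)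
    (he : μ.edges = []) : x = p :=
  uniq_x h (catNilSelf he h.1)

theorem orbit_strip {e : G.E} {y p q : G.BPath} (hq : q ∈ orbit y)
    (h : IsCat (singleE G e) p q) : p ∈ orbit y := by
  obtain ⟨k, α, β, r, hα, hβ, hk⟩ := hq
  cases hae : α.edges with
  | nil =>
    have hqr : q = r := emptyCat hα hae
    subst hqr
    have hsrc : q.src = G.s e := cat_src h
    have hs : β.rng = (singleE G e).src := hβ.1.trans hsrc
    refine ⟨-((β.edges.length : ℤ) + 1), vertexPath G p.src, β.app (singleE G e) hs, p,
      catNilSelf rfl (rng_nil rfl), catAssoc hβ h hs, ?_⟩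
    have hk' : (α.edges.length : ℤ) - (β.edges.length : ℤ) = k := hk
    simp only [FinPath.length, FinPath.app_edges, List.length_append, singleE_edges,
      List.length_cons, List.length_nil, vertexPath]
    push_cast
    omega
  | cons e' es =>
    obtain ⟨q', hq1, hq2⟩ := cat_tail hα hae
    obtain ⟨hee, hpp⟩ := single_cat_inj h hq2
    rw [← hpp] at hq1
    have hk' : (α.edges.length : ℤ) - (β.edges.length : ℤ) = k := hk
    rw [hae] at hk'
    refine ⟨k - 1, α.tail e' es hae, β, r, hq1, hβ, ?_⟩
    have hb : (FinPath.length β : ℤ) = (β.edges.length : ℤ) := rfl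
    have hc : (FinPath.length (α.tail e' es hae) : ℤ) = (es.length : ℤ) := rfl
    have hd : ((((e' : G.E) :: es).length : ℕ) : ℤ) = (es.length : ℤ) + 1 := by
      rw [List.length_cons]; push_cast; ring
    omega

end Aux3
end DirGraph
namespace DirGraph
section Aux4
variable {G : DirGraph}

theorem first_edge_single {e : G.E} {p q : G.BPath} (h : IsCat (singleE G e) p q)
    {w : G.InfPath} (hq : q.1 = Sum.inr w) : w.edges 0 = e := by
  obtain ⟨hr, hm⟩ := h
  obtain ⟨qq, hqs⟩ := q
  dsimp at hq
  subst hq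
  obtain ⟨pp, hps⟩ := p
  cases pp with
  | inl u => exact hm.elim
  | inr u => exact hm.1 0 (by simp)

/-- The tail of an infinite path. -/
def InfPath.tl (w : G.InfPath) : G.InfPath :=
  ⟨fun k => w.edges (k + 1), fun k => w.chain (k + 1)⟩

theorem strip_exists {y : G.BPath} {w : G.InfPath} (hy : y.1 = Sum.inr w) :
    ∃ p : G.BPath, p.1 = Sum.inr w.tl ∧ IsCat (singleE G (w.edges 0)) p y := by
  obtain ⟨yy, hys⟩ := y
  dsimp at hy
  subst hy
  refine ⟨⟨Sum.inr w.tl, fun μ h => by cases h⟩, rfl, ?_, ?_, ?_⟩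
  · exact w.chain 0
  · intro i hi
    cases i with
    | zero => rfl
    | succ n => simp at hi
  · intro i
    show w.edges (1 + i) = w.edges (i + 1)
    rw [Nat.add_comm]

theorem closed_cat_inr {c : G.FinPath} {p : G.BPath} (h : IsCat c p p)
    (hlen : c.edges ≠ []) : ∃ w, p.1 = Sum.inr w := by
  obtain ⟨hr, hm⟩ := h
  obtain ⟨pp, hps⟩ := p
  cases pp with
  | inl q =>
    exfalso
    have h2 := congrArg List.length hm.2
    rw [List.length_append] at h2
    have : c.edges.length = 0 := by omega
    exact hlen (List.length_eq_zero_iff.mp this)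
  | inr q => exact ⟨q, rfl⟩

theorem mem_orbit_inr {x y : G.BPath} {w : G.InfPath} (hx : x.1 = Sum.inr w)
    (hy : y ∈ orbit x) : ∃ w', y.1 = Sum.inr w' := by
  obtain ⟨k, α, β, r, hα, hβ, -⟩ := hy
  obtain ⟨wr, hr⟩ := cat_inr_of_inr' hβ hx
  exact cat_inr_of_inr hα hr

end Aux4
end DirGraph
namespace DirGraph
section Alg
variable {G : DirGraph} {K : Type} [Field K] {a : G.E → K} {p₀ : G.BPath}
  {M : Type} [AddCommGroup M] [Module K M] [Module (LPA G K) M]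
  [IsScalarTower K (LPA G K) M]

theorem lpa_smul_comm (A : LPA G K) (k : K) (x : M) : A • (k • x) = k • (A • x) := by
  rw [← algebraMap_smul (LPA G K) k x, ← mul_smul, ← Algebra.commutes, mul_smul,
    algebraMap_smul]

theorem Ksmul_mem {N : Submodule (LPA G K) M} (k : K) {x : M} (h : x ∈ N) :
    k • x ∈ N := by
  rw [← algebraMap_smul (LPA G K) k x]
  exact N.smul_mem _ h

/-- Scalar action of an element of the Leavitt path algebra as a `K`-linear map. -/
def actL (A : LPA G K) : M →ₗ[K] M where
  toFun := fun m => A • m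
  map_add' := fun x y => smul_add A x y
  map_smul' := fun k x => lpa_smul_comm A k x

@[simp] theorem actL_apply (A : LPA G K) (m : M) : actL A m = A • m := rfl

variable (sp : ChenSpec G K a p₀ M)

theorem repr_ghost_smul (m : M) (e : G.E) (z y : orbit p₀)
    (hzy : IsCat (singleE G e) (z : G.BPath) (y : G.BPath)) :
    sp.basis.repr (ofG G K e • m) z = (a e)⁻¹ * sp.basis.repr m y := by
  classical
  have hext : (Finsupp.lapply (M := K) z).comp
      ((sp.basis.repr : M →ₗ[K] (orbit p₀ →₀ K)).comp (actL (ofG G K e)))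
      = (a e)⁻¹ • ((Finsupp.lapply (M := K) y).comp
        (sp.basis.repr : M →ₗ[K] (orbit p₀ →₀ K))) := by
    refine sp.basis.ext fun w => ?_
    simp only [LinearMap.comp_apply, LinearMap.smul_apply, Finsupp.lapply_apply,
      LinearEquiv.coe_coe, actL_apply, Module.Basis.repr_self, smul_eq_mul]
    by_cases hw : ∃ pb : G.BPath, IsCat (singleE G e) pb (w : G.BPath)
    · obtain ⟨pb, hpb⟩ := hw
      have hpo : pb ∈ orbit p₀ := orbit_strip w.2 hpb
      rw [sp.act_g e ⟨pb, hpo⟩ w hpb, map_smul]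
      simp only [Module.Basis.repr_self, Finsupp.smul_apply, smul_eq_mul]
      by_cases hwy : w = y
      · subst hwy
        have hpz : pb = (z : G.BPath) := uniq_p hpb hzy
        have : (⟨pb, hpo⟩ : orbit p₀) = z := Subtype.ext hpz
        rw [this]
        simp [Finsupp.single_apply]
      · have h1 : (⟨pb, hpo⟩ : orbit p₀) ≠ z := by
          intro hc
          apply hwy
          have : pb = (z : G.BPath) := congrArg Subtype.val hc
          rw [this] at hpb
          exact Subtype.ext (uniq_x hpb hzy)
        have h2 : w ≠ y := hwy
        simp [Finsupp.single_apply, h1, h2]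
    · rw [sp.act_g_zero e w hw, map_zero]
      have h2 : w ≠ y := by
        intro hc
        subst hc
        exact hw ⟨z, hzy⟩
      rw [Finsupp.single_apply, if_neg (fun hc => h2 hc)]
      simp
  have := LinearMap.congr_fun hext m
  simpa using this

theorem repr_ghost_zero (m : M) (e : G.E) (z : orbit p₀)
    (hz : ¬ ∃ y : G.BPath, IsCat (singleE G e) (z : G.BPath) y) :
    sp.basis.repr (ofG G K e • m) z = 0 := by
  classical
  have hext : (Finsupp.lapply (M := K) z).comp
      ((sp.basis.repr : M →ₗ[K] (orbit p₀ →₀ K)).comp (actL (ofG G K e)))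
      = 0 := by
    refine sp.basis.ext fun w => ?_
    simp only [LinearMap.comp_apply, Finsupp.lapply_apply, LinearEquiv.coe_coe,
      actL_apply, LinearMap.zero_apply]
    by_cases hw : ∃ pb : G.BPath, IsCat (singleE G e) pb (w : G.BPath)
    · obtain ⟨pb, hpb⟩ := hw
      have hpo : pb ∈ orbit p₀ := orbit_strip w.2 hpb
      rw [sp.act_g e ⟨pb, hpo⟩ w hpb, map_smul]
      simp only [Module.Basis.repr_self, Finsupp.smul_apply, smul_eq_mul]
      have h1 : (⟨pb, hpo⟩ : orbit p₀) ≠ z := by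
        intro hc
        apply hz
        have : pb = (z : G.BPath) := congrArg Subtype.val hc
        rw [this] at hpb
        exact ⟨w, hpb⟩
      rw [Finsupp.single_apply, if_neg (fun hc => h1 hc)]
      ring
    · rw [sp.act_g_zero e w hw, map_zero]
      simp
  have := LinearMap.congr_fun hext m
  simpa using this

end Alg
end DirGraph
namespace DirGraph
section Alg2
variable {G : DirGraph} {K : Type} [Field K] {a : G.E → K} {p₀ : G.BPath}
  {M : Type} [AddCommGroup M] [Module K M] [Module (LPA G K) M]
  [IsScalarTower K (LPA G K) M] (sp : ChenSpec G K a p₀ M)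

/-- For `z` in the support of `ofG e • m`, the unique `y` with `y = e z`. -/
noncomputable def stepY (e : G.E) (z : orbit p₀) : orbit p₀ :=
  if h : ∃ y : G.BPath, IsCat (singleE G e) (z : G.BPath) y then
    ⟨h.choose, orbit_cons z.2 h.choose_spec⟩ else z

theorem stepY_spec {e : G.E} {z : orbit p₀}
    (h : ∃ y : G.BPath, IsCat (singleE G e) (z : G.BPath) y) :
    IsCat (singleE G e) (z : G.BPath) ((stepY e z : orbit p₀) : G.BPath) := by
  rw [stepY, dif_pos h]
  exact h.choose_spec

theorem mem_supp_step {e : G.E} {m : M} {z : orbit p₀}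
    (hz : z ∈ (sp.basis.repr (ofG G K e • m)).support) :
    (∃ y : G.BPath, IsCat (singleE G e) (z : G.BPath) y) ∧
      stepY e z ∈ (sp.basis.repr m).support := by
  have hz0 : sp.basis.repr (ofG G K e • m) z ≠ 0 := Finsupp.mem_support_iff.mp hz
  have hex : ∃ y : G.BPath, IsCat (singleE G e) (z : G.BPath) y := by
    by_contra hne
    exact hz0 (repr_ghost_zero sp m e z hne)
  refine ⟨hex, Finsupp.mem_support_iff.mpr ?_⟩
  have := repr_ghost_smul sp m e z (stepY e z) (stepY_spec hex)
  rw [this] at hz0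
  exact fun hc => hz0 (by rw [hc, mul_zero])

theorem stepY_injOn (e : G.E) (m : M) :
    Set.InjOn (stepY e) ((sp.basis.repr (ofG G K e • m)).support : Set (orbit p₀)) := by
  intro z hz z' hz' hzz
  have h1 := stepY_spec (mem_supp_step sp (Finset.mem_coe.mp hz)).1
  have h2 := stepY_spec (mem_supp_step sp (Finset.mem_coe.mp hz')).1
  rw [hzz] at h1
  exact Subtype.ext (uniq_p h1 h2)

theorem step_card_le (e : G.E) (m : M) :
    (sp.basis.repr (ofG G K e • m)).support.card ≤ (sp.basis.repr m).support.card :=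
  Finset.card_le_card_of_injOn (stepY e)
    (fun z hz => (mem_supp_step sp hz).2) (stepY_injOn sp e m)

theorem step_card_lt (e : G.E) (m : M) (j : orbit p₀)
    (hj : j ∈ (sp.basis.repr m).support)
    (hjno : ¬ ∃ p : G.BPath, IsCat (singleE G e) p (j : G.BPath)) :
    (sp.basis.repr (ofG G K e • m)).support.card < (sp.basis.repr m).support.card := by
  have hle : (sp.basis.repr (ofG G K e • m)).support.card
      ≤ ((sp.basis.repr m).support.erase j).card := by
    refine Finset.card_le_card_of_injOn (stepY e) (fun z hz => ?_) (stepY_injOn sp e m)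
    refine Finset.mem_erase.mpr ⟨?_, (mem_supp_step sp hz).2⟩
    intro hc
    apply hjno
    refine ⟨(z : G.BPath), ?_⟩
    have := stepY_spec (mem_supp_step sp hz).1
    rw [hc] at this
    exact this
  have hcard := Finset.card_erase_of_mem hj
  have hpos : 0 < (sp.basis.repr m).support.card := Finset.card_pos.mpr ⟨j, hj⟩
  omega

theorem key (N : Submodule (LPA G K) M) :
    ∀ (n : ℕ) (m : M), m ∈ N → ∀ (i j : orbit p₀) (wi wj : G.InfPath),
      (i : G.BPath).1 = Sum.inr wi → (j : G.BPath).1 = Sum.inr wj → i ≠ j →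
      sp.basis.repr m i ≠ 0 → sp.basis.repr m j ≠ 0 →
      (∀ k < n, wi.edges k = wj.edges k) → wi.edges n ≠ wj.edges n →
      ∃ m' ∈ N, m' ≠ 0 ∧
        (sp.basis.repr m').support.card < (sp.basis.repr m).support.card := by
  intro n
  induction n with
  | zero =>
    intro m hm i j wi wj hwi hwj hij hi hj _ hdiff
    set e := wi.edges 0 with he
    obtain ⟨pzi, hz1, hz2⟩ := strip_exists hwi
    have hzo : pzi ∈ orbit p₀ := orbit_strip i.2 hz2
    have hrepr := repr_ghost_smul sp m e ⟨pzi, hzo⟩ i hz2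
    have hne : sp.basis.repr (ofG G K e • m) ⟨pzi, hzo⟩ ≠ 0 := by
      rw [hrepr]
      exact mul_ne_zero (inv_ne_zero (sp.tau_ne e)) hi
    refine ⟨ofG G K e • m, N.smul_mem _ hm, ?_, ?_⟩
    · intro h0
      rw [h0] at hne
      simp at hne
    · refine step_card_lt sp e m j (Finsupp.mem_support_iff.mpr hj) ?_
      rintro ⟨p, hp⟩
      exact hdiff ((first_edge_single hp hwj).symm)
  | succ n IH =>
    intro m hm i j wi wj hwi hwj hij hi hj hagree hdiff
    set e := wi.edges 0 with he
    have hej : wj.edges 0 = e := (hagree 0 (Nat.succ_pos n)).symm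
    obtain ⟨pzi, hz1i, hz2i⟩ := strip_exists hwi
    obtain ⟨pzj, hz1j, hz2j⟩ := strip_exists hwj
    rw [hej] at hz2j
    have hzoi : pzi ∈ orbit p₀ := orbit_strip i.2 hz2i
    have hzoj : pzj ∈ orbit p₀ := orbit_strip j.2 hz2j
    set m' := ofG G K e • m with hm'
    have hri := repr_ghost_smul sp m e ⟨pzi, hzoi⟩ i hz2i
    have hrj := repr_ghost_smul sp m e ⟨pzj, hzoj⟩ j hz2j
    have hi' : sp.basis.repr m' ⟨pzi, hzoi⟩ ≠ 0 := by
      rw [hm', hri]; exact mul_ne_zero (inv_ne_zero (sp.tau_ne e)) hi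
    have hj' : sp.basis.repr m' ⟨pzj, hzoj⟩ ≠ 0 := by
      rw [hm', hrj]; exact mul_ne_zero (inv_ne_zero (sp.tau_ne e)) hj
    have hzizj : (⟨pzi, hzoi⟩ : orbit p₀) ≠ ⟨pzj, hzoj⟩ := by
      intro hc
      have h1 : pzi = pzj := congrArg Subtype.val hc
      have h2 : wi.tl = wj.tl := by
        have := hz1i.symm.trans (h1 ▸ hz1j)
        exact Sum.inr.inj this
      have : wi.tl.edges n = wj.tl.edges n := by rw [h2]
      exact hdiff this
    obtain ⟨m'', hm''N, hm''0, hcard⟩ := IH m' (N.smul_mem _ hm) ⟨pzi, hzoi⟩ ⟨pzj, hzoj⟩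
      wi.tl wj.tl hz1i hz1j hzizj hi' hj'
      (fun k hk => hagree (k + 1) (by omega)) hdiff
    exact ⟨m'', hm''N, hm''0, lt_of_lt_of_le hcard (step_card_le sp e m)⟩

end Alg2
end DirGraph
namespace DirGraph
section Alg3
variable {G : DirGraph} {K : Type} [Field K] {a : G.E → K} {p₀ : G.BPath}
  {M : Type} [AddCommGroup M] [Module K M] [Module (LPA G K) M]
  [IsScalarTower K (LPA G K) M] (sp : ChenSpec G K a p₀ M)

theorem down (N : Submodule (LPA G K) M) :
    ∀ (l : List G.E) (γ : G.FinPath), γ.edges = l → ∀ (t x : G.BPath)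
      (hx : x ∈ orbit p₀), IsCat γ t x → sp.basis ⟨x, hx⟩ ∈ N →
      ∃ ht : t ∈ orbit p₀, sp.basis ⟨t, ht⟩ ∈ N := by
  intro l
  induction l with
  | nil =>
    intro γ hγ t x hx hcat hb
    have hxt : x = t := emptyCat hcat hγ
    subst hxt
    exact ⟨hx, hb⟩
  | cons e es IHl =>
    intro γ hγ t x hx hcat hb
    obtain ⟨x', h1, h2⟩ := cat_tail hcat hγ
    have hx' : x' ∈ orbit p₀ := orbit_strip hx h2
    have hbx' : sp.basis ⟨x', hx'⟩ ∈ N := by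
      have hact := sp.act_g e ⟨x', hx'⟩ ⟨x, hx⟩ h2
      have heq : sp.basis ⟨x', hx'⟩ = a e • (ofG G K e • sp.basis ⟨x, hx⟩) := by
        rw [hact, smul_smul, mul_inv_cancel₀ (sp.tau_ne e), one_smul]
      rw [heq]
      exact Ksmul_mem _ (N.smul_mem _ hb)
    exact IHl (γ.tail e es hγ) rfl t x' hx' h1 hbx'

theorem up (N : Submodule (LPA G K) M) :
    ∀ (l : List G.E) (δ : G.FinPath), δ.edges = l → ∀ (t x : G.BPath)
      (hx : x ∈ orbit p₀) (ht : t ∈ orbit p₀), IsCat δ t x →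
      sp.basis ⟨t, ht⟩ ∈ N → sp.basis ⟨x, hx⟩ ∈ N := by
  intro l
  induction l with
  | nil =>
    intro δ hδ t x hx ht hcat hb
    have hxt : x = t := emptyCat hcat hδ
    subst hxt
    exact hb
  | cons e es IHl =>
    intro δ hδ t x hx ht hcat hb
    obtain ⟨x', h1, h2⟩ := cat_tail hcat hδ
    have hx' : x' ∈ orbit p₀ := orbit_strip hx h2
    have hbx' : sp.basis ⟨x', hx'⟩ ∈ N := IHl (δ.tail e es hδ) rfl t x' hx' ht h1 hb
    have hact := sp.act_e e ⟨x', hx'⟩ ⟨x, hx⟩ h2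
    have heq : sp.basis ⟨x, hx⟩ = (a e)⁻¹ • (ofE G K e • sp.basis ⟨x', hx'⟩) := by
      rw [hact, smul_smul, inv_mul_cancel₀ (sp.tau_ne e), one_smul]
    rw [heq]
    exact Ksmul_mem _ (N.smul_mem _ hbx')

end Alg3
end DirGraph
open DirGraph

/-- for a simple closed path `c` and `a ∈ (K^*)^{E¹}`, the twisted Chen
module `V_{[c^∞]}^a` is a simple `L_K(E)`-module. Here `c^∞` is the unique boundary path
`p₀` with `p₀ = c p₀`. -/
theorem stmt_7 (G : DirGraph) (K : Type) [Field K]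
    (c : G.FinPath) (hc : c.IsSimpleClosed) (a : G.E → K)
    (p₀ : G.BPath) (hp : IsCat c p₀ p₀)
    (M : Type) [AddCommGroup M] [Module K M] [Module (LPA G K) M]
    [IsScalarTower K (LPA G K) M]
    (sp : ChenSpec G K a p₀ M) :
    IsSimpleModule (LPA G K) M := by
  classical
  have hcne : c.edges ≠ [] := by
    have hlen := hc.1.1
    intro hnil
    rw [FinPath.length, hnil] at hlen
    simp at hlen
  obtain ⟨w0, hw0⟩ := closed_cat_inr hp hcne
  have hbp0 : p₀ ∈ orbit p₀ := mem_orbit_self p₀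
  have hNT : Nontrivial M := ⟨sp.basis ⟨p₀, hbp0⟩, 0, sp.basis.ne_zero _⟩
  haveI : Nontrivial (Submodule (LPA G K) M) :=
    (Submodule.nontrivial_iff (LPA G K)).mpr hNT
  refine { eq_bot_or_eq_top := fun N => ?_ }
  by_cases hN : N = ⊥
  · exact Or.inl hN
  right
  obtain ⟨m, hmN, hm0⟩ := (Submodule.ne_bot_iff N).mp hN
  -- Step B : N contains a basis vector
  have hB : ∀ (cnum : ℕ) (m : M), m ∈ N → m ≠ 0 →
      (sp.basis.repr m).support.card ≤ cnum → ∃ q : orbit p₀, sp.basis q ∈ N := by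
    intro cnum
    induction cnum with
    | zero =>
      intro m hm hm0 hcard
      exfalso
      apply hm0
      have h1 : (sp.basis.repr m).support = ∅ :=
        Finset.card_eq_zero.mp (Nat.le_zero.mp hcard)
      have h2 : sp.basis.repr m = 0 := Finsupp.support_eq_empty.mp h1
      exact (LinearEquiv.map_eq_zero_iff _).mp h2
    | succ nn IHc =>
      intro m hm hm0 hcard
      by_cases hsmall : (sp.basis.repr m).support.card ≤ nn
      · exact IHc m hm hm0 hsmall
      by_cases h1 : (sp.basis.repr m).support.card ≤ 1
      · -- singleton support
        have hpos : 0 < (sp.basis.repr m).support.card := by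
          refine Finset.card_pos.mpr (Finsupp.support_nonempty_iff.mpr ?_)
          exact fun hc => hm0 ((LinearEquiv.map_eq_zero_iff _).mp hc)
        have hone : (sp.basis.repr m).support.card = 1 := by omega
        obtain ⟨i, hi⟩ := Finset.card_eq_one.mp hone
        have hmem : i ∈ (sp.basis.repr m).support := by
          rw [hi]; exact Finset.mem_singleton_self i
        set cc := sp.basis.repr m i with hccdef
        have hci : cc ≠ 0 := Finsupp.mem_support_iff.mp hmem
        have hsum : (sp.basis.repr m).sum (fun w c0 => c0 • sp.basis w) = m := by
          rw [← Finsupp.linearCombination_apply]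
          exact sp.basis.linearCombination_repr m
        have hrepr : m = cc • sp.basis i := by
          conv_lhs => rw [← hsum]
          rw [Finsupp.sum, hi, Finset.sum_singleton]
        refine ⟨i, ?_⟩
        have hbi : sp.basis i = cc⁻¹ • m := by
          rw [hrepr, smul_smul, inv_mul_cancel₀ hci, one_smul]
        rw [hbi]
        exact Ksmul_mem _ hm
      · -- at least two support elements
        have h2 : 1 < (sp.basis.repr m).support.card := by omega
        obtain ⟨i, hi, j, hj, hij⟩ := Finset.one_lt_card.mp h2
        obtain ⟨wi, hwi⟩ := mem_orbit_inr hw0 i.2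
        obtain ⟨wj, hwj⟩ := mem_orbit_inr hw0 j.2
        have hexd : ∃ nd, wi.edges nd ≠ wj.edges nd := by
          by_contra hcon
          push_neg at hcon
          exact hij (Subtype.ext (Subtype.ext (by
            rw [hwi, hwj]
            exact congrArg _ (InfPath.ext' (funext hcon)))))
        have hdiff : wi.edges (Nat.find hexd) ≠ wj.edges (Nat.find hexd) :=
          Nat.find_spec hexd
        have hagree : ∀ k < Nat.find hexd, wi.edges k = wj.edges k :=
          fun k hk => not_not.mp (Nat.find_min hexd hk)
        obtain ⟨m', hm'N, hm'0, hlt⟩ := key sp N (Nat.find hexd) m hm i j wi wj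
          hwi hwj hij (Finsupp.mem_support_iff.mp hi) (Finsupp.mem_support_iff.mp hj)
          hagree hdiff
        exact IHc m' hm'N hm'0 (by omega)
  obtain ⟨q, hq⟩ := hB (sp.basis.repr m).support.card m hmN hm0 le_rfl
  -- Step C : N contains every basis vector
  have hbp0N : sp.basis ⟨p₀, hbp0⟩ ∈ N := by
    obtain ⟨k, γ, δ, t, hγ, hδ, -⟩ := q.2
    obtain ⟨ht, hbt⟩ := down sp N γ.edges γ rfl t (q : G.BPath) q.2 hγ hq
    exact up sp N δ.edges δ rfl t p₀ hbp0 ht hδ hbt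
  have hall : ∀ y : orbit p₀, sp.basis y ∈ N := by
    intro y
    obtain ⟨k, α, β, r, hα, hβ, -⟩ := y.2
    obtain ⟨hr, hbr⟩ := down sp N β.edges β rfl r p₀ hbp0 hβ hbp0N
    exact up sp N α.edges α rfl r (y : G.BPath) y.2 hr hα hbr
  rw [eq_top_iff]
  intro m' _
  have hsum : (sp.basis.repr m').sum (fun w cc => cc • sp.basis w) = m' := by
    rw [← Finsupp.linearCombination_apply]
    exact sp.basis.linearCombination_repr m'
  rw [← hsum, Finsupp.sum]
  exact Submodule.sum_mem N fun w _ => Ksmul_mem _ (hall w)
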